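/- Let P(z) be a polynomial of degree k−1 with 0/1 coefficients and let m ≥ k. Then the Riordan graph G_n(P(z), z^m) — the graph on {1,…,n} whose adjacency below the diagonal is given by the binary Riordan matrix B(zP(z), z^m) — is a forest for every n, and hence is word-representable. -/

import Mathlib

/-- Two letters `x` and `y` alternate in the word `w` if, after deleting all
letters other than `x` and `y`, consecutive letters always differ
(i.e. the restriction has the form `xyxy⋯` or `yxyx⋯`). -/
def Alternates {V : Type*} [DecidableEq V] (w : List V) (x y : V) : Prop :=
  (w.filter (fun z => z = x || z = y)).Chain' (· ≠ ·)

/-- A word `w` represents the graph `G`: every vertex occurs in `w`, and two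
distinct letters alternate in `w` iff they are adjacent in `G`. -/
def Represents {V : Type*} [DecidableEq V] (w : List V) (G : SimpleGraph V) : Prop :=
  (∀ v, v ∈ w) ∧ ∀ x y : V, x ≠ y → (Alternates w x y ↔ G.Adj x y)

/-- A graph is word-representable if some word represents it. -/
def WordRepresentable {V : Type*} [DecidableEq V] (G : SimpleGraph V) : Prop :=
  ∃ w : List V, Represents w G

open List SimpleGraph

def RG (m : ℕ) (p : ℕ → Bool) (n : ℕ) : SimpleGraph (Fin n) :=
  SimpleGraph.fromRel (fun i j : Fin n =>
    (j : ℕ) < (i : ℕ) ∧ m * (j : ℕ) + 1 ≤ (i : ℕ) ∧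
      p ((i : ℕ) - 1 - m * (j : ℕ)) = true)


lemma not_chain'_ne_middle {α : Type*} (l1 l2 : List α) (a : α) :
    ¬ (l1 ++ a :: a :: l2).Chain' (· ≠ ·) := by
  intro h
  rcases List.isChain_append.mp h with ⟨-, h2, -⟩
  exact (List.isChain_cons_cons.mp h2).1 rfl

lemma count_eq_one_split {α : Type*} [DecidableEq α] {l : List α} {a : α}
    (h : l.count a = 1) : ∃ B C, l = B ++ a :: C ∧ a ∉ B ∧ a ∉ C := by
  induction l with
  | nil => simp at h
  | cons b t ih =>
    by_cases hb : b = a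
    · subst hb
      have ht : t.count b = 0 := by simpa [List.count_cons] using h
      exact ⟨[], t, by simp, by simp, by simpa [List.count_eq_zero] using ht⟩
    · have ht : t.count a = 1 := by simpa [List.count_cons, Ne.symm hb, hb] using h
      obtain ⟨B, C, rfl, hB, hC⟩ := ih ht
      refine ⟨b :: B, C, by simp, ?_, hC⟩
      intro hmem
      rcases List.mem_cons.mp hmem with h' | h'
      · exact hb h'.symm
      · exact hB h'

lemma count_eq_two_split {α : Type*} [DecidableEq α] {l : List α} {a : α}
    (h : l.count a = 2) : ∃ A B C, l = A ++ a :: B ++ a :: C ∧ a ∉ A ∧ a ∉ B ∧ a ∉ C := by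
  induction l with
  | nil => simp at h
  | cons b t ih =>
    by_cases hb : b = a
    · subst hb
      have ht : t.count b = 1 := by simpa [List.count_cons] using h
      obtain ⟨B, C, rfl, hB, hC⟩ := count_eq_one_split ht
      exact ⟨[], B, C, by simp, by simp, hB, hC⟩
    · have ht : t.count a = 2 := by simpa [List.count_cons, Ne.symm hb, hb] using h
      obtain ⟨A, B, C, rfl, hA, hB, hC⟩ := ih ht
      refine ⟨b :: A, B, C, by simp, ?_, hB, hC⟩
      intro hmem
      rcases List.mem_cons.mp hmem with h' | h'
      · exact hb h'.symm
      · exact hA h'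


lemma getVert_eq_support_getElem {V : Type*} {G : SimpleGraph V} {u v : V} (p : G.Walk u v) :
    ∀ i : ℕ, ∀ hi : i ≤ p.length,
      p.getVert i = p.support[i]'(by rw [Walk.length_support]; omega) := by
  induction p with
  | nil =>
    intro i hi
    have : i = 0 := by simpa using hi
    subst this; simp
  | cons h q ih =>
    intro i hi
    cases i with
    | zero => simp
    | succ j =>
      have hj : j ≤ q.length := by simpa using hi
      simp [Walk.getVert_cons_succ, Walk.support_cons, ih j hj]

lemma getVert_eq_tail_getElem {V : Type*} {G : SimpleGraph V} {u v : V} (p : G.Walk u v)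
    (i : ℕ) (h1 : 1 ≤ i) (hi : i ≤ p.length) :
    p.getVert i = p.support.tail[i-1]'(by simp [Walk.length_support]; omega) := by
  rw [getVert_eq_support_getElem p i hi]
  rw [List.getElem_of_eq (Walk.support_eq_cons p)]
  rw [List.getElem_cons]
  simp [show i ≠ 0 by omega]

lemma acyclic_of_unique_smaller {n : ℕ} (G : SimpleGraph (Fin n))
    (h : ∀ a b c : Fin n, G.Adj a b → G.Adj a c → b < a → c < a → b = c) :
    G.IsAcyclic := by
  intro v c hc
  have hv : v ∈ c.support := c.start_mem_support
  set s : Finset (Fin n) := c.support.toFinset with hs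
  have hsne : s.Nonempty := ⟨v, by simp [hs, hv]⟩
  set u := s.max' hsne with hu
  have hu_mem : u ∈ c.support := by
    have := s.max'_mem hsne
    simpa [hs] using this
  have hu_max : ∀ w ∈ c.support, w ≤ u := fun w hw => s.le_max' w (by simp [hs, hw])
  set d := c.rotate u hu_mem with hd_def
  have hd : d.IsCycle := hc.rotate hu_mem
  have hL : 3 ≤ d.length := hd.three_le_length
  have hsupp : ∀ w ∈ d.support, w ≤ u := by
    intro w hw
    rw [Walk.support_eq_cons] at hw
    rcases List.mem_cons.mp hw with rfl | hw
    · exact le_refl _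
    · have := (Walk.support_rotate c u hu_mem).mem_iff.mp hw
      apply hu_max
      rw [Walk.support_eq_cons]
      exact List.mem_cons_of_mem _ this
  set b1 := d.getVert 1 with hb1
  set b2 := d.getVert (d.length - 1) with hb2
  have hadj1 : G.Adj u b1 := Walk.adj_snd hd.not_nil
  have hadj2 : G.Adj b2 u := by
    have := d.adj_getVert_succ (i := d.length - 1) (by omega)
    rw [show d.length - 1 + 1 = d.length by omega, Walk.getVert_length] at this
    exact this
  have htl : d.support.tail.length = d.length := by
    have := d.length_support
    rw [Walk.support_eq_cons] at this
    simpa using this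
  have e1 : b1 = d.support.tail[0]'(by omega) := by
    rw [hb1, getVert_eq_tail_getElem d 1 le_rfl (by omega)]
  have e2 : b2 = d.support.tail[d.length - 2]'(by omega) := by
    rw [hb2, getVert_eq_tail_getElem d (d.length - 1) (by omega) (by omega)]
    simp [show d.length - 1 - 1 = d.length - 2 by omega]
  have hmem1 : b1 ∈ d.support := by
    rw [e1]
    exact List.mem_of_mem_tail (List.getElem_mem _)
  have hmem2 : b2 ∈ d.support := by
    rw [e2]
    exact List.mem_of_mem_tail (List.getElem_mem _)
  have hlt1 : b1 < u := lt_of_le_of_ne (hsupp b1 hmem1) hadj1.ne'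
  have hlt2 : b2 < u := lt_of_le_of_ne (hsupp b2 hmem2) hadj2.ne
  have heq : b1 = b2 := h u b1 b2 hadj1 hadj2.symm hlt1 hlt2
  have hnd : d.support.tail.Nodup := hd.2
  rw [e1, e2] at heq
  have := List.Nodup.getElem_inj_iff hnd |>.mp heq
  omega

lemma alternates_comm {V : Type*} [DecidableEq V] (w : List V) (x y : V) :
    Alternates w x y ↔ Alternates w y x := by
  unfold Alternates
  rw [List.filter_congr (l := w)
    (q := fun z => z = y || z = x) (fun z _ => by simp [Bool.or_comm])]

lemma filter_map_castSucc {n : ℕ} (w : List (Fin n)) (u v : Fin n) :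
    (w.map Fin.castSucc).filter (fun z => z = u.castSucc || z = v.castSucc)
      = (w.filter (fun z => z = u || z = v)).map Fin.castSucc := by
  rw [List.filter_map]
  congr 1
  apply List.filter_congr
  intro z _
  simp [Function.comp, Fin.castSucc_inj]

lemma filter_map_castSucc_last {n : ℕ} (w : List (Fin n)) (u : Fin n) :
    (w.map Fin.castSucc).filter (fun z => z = u.castSucc || z = Fin.last n)
      = (w.filter (fun z => z = u)).map Fin.castSucc := by
  rw [List.filter_map]
  congr 1
  apply List.filter_congr
  intro z _
  simp [Function.comp, Fin.castSucc_inj, (Fin.castSucc_lt_last z).ne]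

lemma alternates_map {n : ℕ} (w : List (Fin n)) (u v : Fin n) :
    Alternates (w.map Fin.castSucc) u.castSucc v.castSucc ↔ Alternates w u v := by
  unfold Alternates
  rw [filter_map_castSucc, show ∀ l : List (Fin n), List.Chain' (· ≠ ·) (l.map Fin.castSucc) ↔
    List.Chain' (fun a b => a.castSucc ≠ b.castSucc) l from fun l => List.isChain_map _]
  constructor <;> intro h <;> refine h.imp ?_ <;> intro a b hab
  · exact fun e => hab (congrArg Fin.castSucc e)
  · exact fun e => hab (Fin.castSucc_inj.mp e)

lemma rel_unique {k m : ℕ} (p : ℕ → Bool) (hk : 0 < k) (hkm : k ≤ m)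
    (hp : ∀ r, k ≤ r → p r = false)
    {i j : ℕ} (h1 : j < i) (h2 : m * j + 1 ≤ i) (h3 : p (i - 1 - m * j) = true) :
    j = (i - 1) / m ∧ p ((i - 1) % m) = true := by
  have hm : 0 < m := hk.trans_le hkm
  have hsmall : i - 1 - m * j < k := by
    by_contra hc
    push_neg at hc
    rw [hp _ hc] at h3
    exact absurd h3 (by simp)
  have h5 : j * m ≤ i - 1 := by rw [Nat.mul_comm]; omega
  have h6 : i - 1 < (j + 1) * m := by
    rw [Nat.succ_mul, Nat.mul_comm j m]; omega
  have hj : (i - 1) / m = j := Nat.div_eq_of_lt_le h5 h6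
  have hmod := Nat.mod_add_div (i - 1) m
  rw [hj] at hmod
  refine ⟨hj.symm, ?_⟩
  have : (i - 1) % m = i - 1 - m * j := by omega
  rw [this]; exact h3

lemma adj_castSucc {m n : ℕ} (p : ℕ → Bool) (u v : Fin n) :
    (RG m p (n+1)).Adj u.castSucc v.castSucc ↔ (RG m p n).Adj u v := by
  simp [RG, SimpleGraph.fromRel_adj, Fin.castSucc_inj]

lemma adj_last {k m n : ℕ} (p : ℕ → Bool) (hk : 0 < k) (hkm : k ≤ m)
    (hp : ∀ r, k ≤ r → p r = false) (u : Fin n) :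
    (RG m p (n+1)).Adj (Fin.last n) u.castSucc ↔
      ((u : ℕ) = (n - 1) / m ∧ p ((n - 1) % m) = true) := by
  have hm : 0 < m := hk.trans_le hkm
  have hun : (u : ℕ) < n := u.isLt
  have hne : Fin.last n ≠ u.castSucc := (Fin.castSucc_lt_last u).ne'
  rw [RG, SimpleGraph.fromRel_adj]
  simp only [Fin.val_last, Fin.coe_castSucc]
  constructor
  · rintro ⟨-, h | h⟩
    · exact rel_unique p hk hkm hp h.1 h.2.1 h.2.2
    · omega
  · rintro ⟨hu, hpv⟩
    refine ⟨hne, Or.inl ⟨hun, ?_, ?_⟩⟩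
    · rw [hu]
      have : m * ((n-1)/m) ≤ n - 1 := Nat.mul_div_le _ _
      omega
    · rw [hu]
      have hmod := Nat.mod_add_div (n - 1) m
      rw [show n - 1 - m * ((n-1)/m) = (n-1) % m by omega]
      exact hpv

lemma exists_word (k m : ℕ) (p : ℕ → Bool) (hk : 0 < k) (hkm : k ≤ m)
    (hp : ∀ r, k ≤ r → p r = false) :
    ∀ n, ∃ w : List (Fin n), (∀ v, w.count v = 2) ∧
      ∀ x y : Fin n, x ≠ y → (Alternates w x y ↔ (RG m p n).Adj x y) := by
  intro n
  induction n with
  | zero => exact ⟨[], fun v => v.elim0, fun x => x.elim0⟩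
  | succ n ih =>
    obtain ⟨w, hcount, halt⟩ := ih
    set y : Fin (n+1) := Fin.last n with hy
    set w' := w.map Fin.castSucc with hw'
    have hyw' : y ∉ w' := by
      rw [hw']
      intro h
      obtain ⟨a, -, ha⟩ := List.mem_map.mp h
      exact (Fin.castSucc_lt_last a).ne ha
    have hcount' : ∀ z : Fin n, w'.count z.castSucc = 2 := fun z =>
      (List.count_map_of_injective w _ (Fin.castSucc_injective n) z).trans (hcount z)
    by_cases hedge : 0 < n ∧ p ((n - 1) % m) = true
    · -- leaf case
      obtain ⟨hn, hpm⟩ := hedge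
      have hj0 : (n - 1) / m < n := lt_of_le_of_lt (Nat.div_le_self _ _) (by omega)
      set j0 : Fin n := ⟨(n - 1) / m, hj0⟩ with hj0def
      set x : Fin (n+1) := j0.castSucc with hx
      have hxy : x ≠ y := (Fin.castSucc_lt_last j0).ne
      obtain ⟨A, B, C, hw2, hxA, hxB, hxC⟩ := count_eq_two_split (hcount' j0)
      have hmemw' : ∀ z, z ∈ A ∨ z ∈ B ∨ z ∈ C → z ∈ w' := by
        intro z hz
        rw [hw2]
        rcases hz with h | h | h <;> simp [h]
      have hyA : y ∉ A := fun h => hyw' (hmemw' y (Or.inl h))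
      have hyB : y ∉ B := fun h => hyw' (hmemw' y (Or.inr (Or.inl h)))
      have hyC : y ∉ C := fun h => hyw' (hmemw' y (Or.inr (Or.inr h)))
      set W : List (Fin (n+1)) := A ++ x :: (B ++ y :: x :: y :: C) with hW
      have hfilterW : ∀ q : Fin (n+1) → Bool, q y = false → W.filter q = w'.filter q := by
        intro q hq
        rw [hW, hw2]
        simp [List.filter_append, List.filter_cons, hq, hx]
      -- the last-vertex alternation characterization
      have hlastcase : ∀ u : Fin n,
          (Alternates W u.castSucc y ↔ (RG m p (n+1)).Adj u.castSucc y) := by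
        intro u
        by_cases hu : u = j0
        · subst hu
          constructor
          · intro _
            rw [(RG m p (n+1)).adj_comm, adj_last p hk hkm hp]
            exact ⟨rfl, hpm⟩
          · intro _
            unfold Alternates
            have hfA : A.filter (fun z => z = x || z = y) = [] := by
              rw [List.filter_eq_nil_iff]
              intro a ha
              simp only [Bool.or_eq_true, decide_eq_true_eq, not_or]
              exact ⟨fun h => hxA (by rwa [h] at ha), fun h => hyA (by rwa [h] at ha)⟩
            have hfB : B.filter (fun z => z = x || z = y) = [] := by
              rw [List.filter_eq_nil_iff]
              intro a ha
              simp only [Bool.or_eq_true, decide_eq_true_eq, not_or]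
              exact ⟨fun h => hxB (by rwa [h] at ha), fun h => hyB (by rwa [h] at ha)⟩
            have hfC : C.filter (fun z => z = x || z = y) = [] := by
              rw [List.filter_eq_nil_iff]
              intro a ha
              simp only [Bool.or_eq_true, decide_eq_true_eq, not_or]
              exact ⟨fun h => hxC (by rwa [h] at ha), fun h => hyC (by rwa [h] at ha)⟩
            rw [hW, ← hx]
            simp [List.filter_append, List.filter_cons, hfA, hfB, hfC, List.Chain', List.isChain_cons_cons,
              hxy, hxy.symm]
        · have hnadj : ¬ (RG m p (n+1)).Adj u.castSucc y := by
            rw [(RG m p (n+1)).adj_comm, adj_last p hk hkm hp]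
            rintro ⟨h1, -⟩
            exact hu (Fin.ext h1)
          have hnalt : ¬ Alternates W u.castSucc y := by
            unfold Alternates
            have hpx : (decide (x = u.castSucc) || decide (x = y)) = false := by
              simp only [Bool.or_eq_false_iff, decide_eq_false_iff_not]
              exact ⟨fun h => hu (Fin.castSucc_injective n h).symm, hxy⟩
            have hpy : (decide (y = u.castSucc) || decide (y = y)) = true := by simp
            have : W.filter (fun z => z = u.castSucc || z = y)
                = (A.filter (fun z => z = u.castSucc || z = y)
                    ++ B.filter (fun z => z = u.castSucc || z = y))
                  ++ y :: y :: C.filter (fun z => z = u.castSucc || z = y) := by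
              rw [hW]
              simp [List.filter_append, List.filter_cons, hpx, hpy]
            rw [this]
            exact not_chain'_ne_middle _ _ _
          exact iff_of_false hnalt hnadj
      refine ⟨W, ?_, ?_⟩
      · intro v
        rcases Fin.eq_castSucc_or_eq_last v with ⟨z, rfl⟩ | rfl
        · have h2 := hcount' z
          rw [hw2] at h2
          have hzy : z.castSucc ≠ y := (Fin.castSucc_lt_last z).ne
          have hzy' : y ≠ z.castSucc := hzy.symm
          rw [hW]
          simp only [List.count_append, List.count_cons] at h2 ⊢
          split_ifs at h2 ⊢ <;> first | omega | simp_all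
        · have h0 : w'.count y = 0 := List.count_eq_zero_of_not_mem hyw'
          rw [hw2] at h0
          rw [hW]
          simp only [List.count_append, List.count_cons] at h0 ⊢
          split_ifs at h0 ⊢ <;> first | omega | simp_all
      · intro a b hab
        rcases Fin.eq_castSucc_or_eq_last a with ⟨u, rfl⟩ | rfl <;>
          rcases Fin.eq_castSucc_or_eq_last b with ⟨v, rfl⟩ | rfl
        · have huv : u ≠ v := fun h => hab (congrArg _ h)
          have hqy : (decide (y = u.castSucc) || decide (y = v.castSucc)) = false := by
            simp only [Bool.or_eq_false_iff, decide_eq_false_iff_not]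
            exact ⟨(Fin.castSucc_lt_last u).ne', (Fin.castSucc_lt_last v).ne'⟩
          unfold Alternates
          rw [hfilterW _ hqy]
          rw [show (w'.filter (fun z => z = u.castSucc || z = v.castSucc)).Chain' (· ≠ ·)
              = Alternates w' u.castSucc v.castSucc from rfl]
          rw [hw', alternates_map, adj_castSucc, halt u v huv]
        · exact hlastcase u
        · rw [alternates_comm, (RG m p (n+1)).adj_comm]
          exact hlastcase v
        · exact absurd rfl hab
    · -- isolated case
      set W : List (Fin (n+1)) := y :: y :: w' with hW
      have hnadjlast : ∀ u : Fin n, ¬ (RG m p (n+1)).Adj u.castSucc y := by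
        intro u
        rw [(RG m p (n+1)).adj_comm, adj_last p hk hkm hp]
        rintro ⟨-, h2⟩
        exact hedge ⟨u.pos, h2⟩
      have hlastcase : ∀ u : Fin n,
          (Alternates W u.castSucc y ↔ (RG m p (n+1)).Adj u.castSucc y) := by
        intro u
        refine iff_of_false ?_ (hnadjlast u)
        unfold Alternates
        have hpy : (decide (y = u.castSucc) || decide (y = y)) = true := by simp
        have : W.filter (fun z => z = u.castSucc || z = y)
            = [] ++ y :: y :: w'.filter (fun z => z = u.castSucc || z = y) := by
          rw [hW]
          simp [List.filter_cons, hpy]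
        rw [this]
        exact not_chain'_ne_middle _ _ _
      refine ⟨W, ?_, ?_⟩
      · intro v
        rcases Fin.eq_castSucc_or_eq_last v with ⟨z, rfl⟩ | rfl
        · have h2 := hcount' z
          have hzy : z.castSucc ≠ y := (Fin.castSucc_lt_last z).ne
          have hzy' : y ≠ z.castSucc := hzy.symm
          rw [hW]
          simp only [List.count_cons] at h2 ⊢
          split_ifs <;> first | omega | simp_all
        · have h0 : w'.count y = 0 := List.count_eq_zero_of_not_mem hyw'
          rw [hW]
          simp only [List.count_cons] at h0 ⊢
          split_ifs <;> first | omega | simp_all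
      · intro a b hab
        rcases Fin.eq_castSucc_or_eq_last a with ⟨u, rfl⟩ | rfl <;>
          rcases Fin.eq_castSucc_or_eq_last b with ⟨v, rfl⟩ | rfl
        · have huv : u ≠ v := fun h => hab (congrArg _ h)
          have hqy : (decide (y = u.castSucc) || decide (y = v.castSucc)) = false := by
            simp only [Bool.or_eq_false_iff, decide_eq_false_iff_not]
            exact ⟨(Fin.castSucc_lt_last u).ne', (Fin.castSucc_lt_last v).ne'⟩
          unfold Alternates
          rw [hW]
          simp only [List.filter_cons, hqy, Bool.false_eq_true, if_false, ite_false]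
          rw [show (w'.filter (fun z => z = u.castSucc || z = v.castSucc)).Chain' (· ≠ ·)
              = Alternates w' u.castSucc v.castSucc from rfl]
          rw [hw', alternates_map, adj_castSucc, halt u v huv]
        · exact hlastcase u
        · rw [alternates_comm, (RG m p (n+1)).adj_comm]
          exact hlastcase v
        · exact absurd rfl hab

/-- The Riordan graph G_n(P(z), z^m) with P a 0/1-polynomial of degree k−1 and
m ≥ k: vertices (0-indexed as Fin n) j < i are adjacent iff m·j + 1 ≤ i and the
coefficient p (i − 1 − m·j) of P is 1.  Every such graph is a forest, hence
word-representable. -/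
theorem riordan_polynomial_zm_forest_word_representable (k m n : ℕ)
    (p : ℕ → Bool) (hk : 0 < k) (hkm : k ≤ m)
    (hdeg : p (k - 1) = true) (hp : ∀ r, k ≤ r → p r = false) :
    (SimpleGraph.fromRel (fun i j : Fin n =>
        (j : ℕ) < (i : ℕ) ∧ m * (j : ℕ) + 1 ≤ (i : ℕ) ∧
          p ((i : ℕ) - 1 - m * (j : ℕ)) = true)).IsAcyclic ∧
    WordRepresentable (SimpleGraph.fromRel (fun i j : Fin n =>
        (j : ℕ) < (i : ℕ) ∧ m * (j : ℕ) + 1 ≤ (i : ℕ) ∧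
          p ((i : ℕ) - 1 - m * (j : ℕ)) = true)) := by
  show (RG m p n).IsAcyclic ∧ WordRepresentable (RG m p n)
  constructor
  · apply acyclic_of_unique_smaller
    intro a b c hab hac hb hc
    have key : ∀ d : Fin n, (RG m p n).Adj a d → d < a → (d : ℕ) = ((a : ℕ) - 1) / m := by
      intro d had hd
      rw [Fin.lt_def] at hd
      rcases (SimpleGraph.fromRel_adj _ _ _).mp had with ⟨-, h | h⟩
      · exact (rel_unique p hk hkm hp h.1 h.2.1 h.2.2).1
      · exact absurd h.1 (by omega)
    exact Fin.ext ((key b hab hb).trans (key c hac hc).symm)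
  · obtain ⟨w, hcount, halt⟩ := exists_word k m p hk hkm hp n
    refine ⟨w, fun v => ?_, halt⟩
    have := hcount v
    exact List.count_pos_iff.mp (by omega)
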